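/- Let {X_i, Z_k} be an integral basis of a pseudo H-type Lie algebra with s > 0. If for some index i and some k, ℓ one has J_{Z_k}(X_i) = ± J_{Z_ℓ}(X_i), then k = ℓ. Consequently each basis vector X_i is mapped to ±X_j by at most one of the operators J_{Z_k}. -/
import Mathlib


open scoped BigOperators

/-- The signature-(r,s) scalar product on `ℝ^{r+s}`. -/
noncomputable def sig (r s : ℕ) (z z' : Fin (r + s) → ℝ) : ℝ :=
  ∑ i : Fin (r + s), (if (i : ℕ) < r then (1 : ℝ) else -1) * z i * z' i

/-- For an integral basis `{X_i, Z_k}` of a pseudo H-type Lie algebra with `s > 0`: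
if `J_{Z_k}(X_i) = ± J_{Z_ℓ}(X_i)` for some `i`, then `k = ℓ`.  Consequently each basis
vector `X_i` is mapped to `±X_j` by at most one of the operators `J_{Z_k}`. -/
theorem statement3 {r s N : ℕ} (hs : 0 < s) {V : Type*} [AddCommGroup V] [Module ℝ V]
    (B : LinearMap.BilinForm ℝ V)
    (hBsymm : ∀ X Y : V, B X Y = B Y X)
    (J : (Fin (r + s) → ℝ) →ₗ[ℝ] (V →ₗ[ℝ] V))
    (hCl : ∀ z z' : Fin (r + s) → ℝ,
      J z ∘ₗ J z' + J z' ∘ₗ J z = (-2 * sig r s z z') • (LinearMap.id : V →ₗ[ℝ] V))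
    (hskew : ∀ (z : Fin (r + s) → ℝ) (X Y : V), B (J z X) Y + B X (J z Y) = 0)
    -- the orthonormal basis Z of ℝ^{r,s}
    (Z : Fin (r + s) → (Fin (r + s) → ℝ))
    (hZ : ∀ k l, sig r s (Z k) (Z l)
      = if k = l then (if (k : ℕ) < r then 1 else -1) else 0)
    -- the orthonormal basis X of V, of signature (N, N)
    (X : Fin (2 * N) → V)
    (hX : ∀ i j, B (X i) (X j) = if i = j then (if (i : ℕ) < N then 1 else -1) else 0)
    -- the integrality property: each J_{Z_k} maps X_i to ±X_j with j ≠ i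
    (hint : ∀ (k : Fin (r + s)) (i : Fin (2 * N)),
      ∃ j, j ≠ i ∧ (J (Z k) (X i) = X j ∨ J (Z k) (X i) = - X j)) :
    (∀ (i : Fin (2 * N)) (k l : Fin (r + s)),
      (J (Z k) (X i) = J (Z l) (X i) ∨ J (Z k) (X i) = - J (Z l) (X i)) → k = l) ∧
    (∀ (i j : Fin (2 * N)) (k l : Fin (r + s)),
      (J (Z k) (X i) = X j ∨ J (Z k) (X i) = - X j) →
      (J (Z l) (X i) = X j ∨ J (Z l) (X i) = - X j) → k = l) := by
  classical
  have hb : ∀ i : Fin (2 * N), B (X i) (X i) ≠ 0 := by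
    intro i
    rw [hX i i]
    split_ifs <;> simp_all
  have hJ2 : ∀ (k : Fin (r + s)) (v : V),
      J (Z k) (J (Z k) v) = (-(if (k : ℕ) < r then (1 : ℝ) else -1)) • v := by
    intro k v
    have h := LinearMap.congr_fun (hCl (Z k) (Z k)) v
    rw [hZ k k, if_pos rfl] at h
    simp only [LinearMap.add_apply, LinearMap.comp_apply, LinearMap.smul_apply,
      LinearMap.id_apply] at h
    have h2 : (2 : ℝ) • (J (Z k) (J (Z k) v))
        = (2 : ℝ) • ((-(if (k : ℕ) < r then (1 : ℝ) else -1)) • v) := by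
      rw [two_smul, h, smul_smul]
      ring_nf
    exact smul_right_injective V (by norm_num) h2
  have hanti : ∀ (k l : Fin (r + s)), k ≠ l → ∀ v : V,
      J (Z k) (J (Z l) v) = - J (Z l) (J (Z k) v) := by
    intro k l hkl v
    have h := LinearMap.congr_fun (hCl (Z k) (Z l)) v
    rw [hZ k l, if_neg hkl] at h
    simp only [LinearMap.add_apply, LinearMap.comp_apply, LinearMap.smul_apply,
      LinearMap.id_apply, mul_zero, neg_zero, zero_smul] at h
    exact eq_neg_of_add_eq_zero_left h
  have key : ∀ (i : Fin (2 * N)) (k l : Fin (r + s)) (c : ℝ), c * c = 1 →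
      J (Z k) (X i) = c • J (Z l) (X i) → k = l := by
    intro i k l c hc hJkl
    by_contra hkl
    set ek : ℝ := if (k : ℕ) < r then (1 : ℝ) else -1 with hek
    set el : ℝ := if (l : ℕ) < r then (1 : ℝ) else -1 with hel
    -- Step A : (-ek) • X i = el • X i
    have stepA : (-ek) • X i = el • X i := by
      calc (-ek) • X i = J (Z k) (J (Z k) (X i)) := (hJ2 k (X i)).symm
        _ = J (Z k) (c • J (Z l) (X i)) := by rw [← hJkl]
        _ = c • J (Z k) (J (Z l) (X i)) := by rw [map_smul]
        _ = c • (- J (Z l) (J (Z k) (X i))) := by rw [hanti k l hkl]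
        _ = c • (- J (Z l) (c • J (Z l) (X i))) := by rw [← hJkl]
        _ = c • (- (c • ((-el) • X i))) := by rw [map_smul, hJ2 l (X i)]
        _ = el • X i := by
            rw [smul_neg, smul_smul, smul_smul, ← neg_smul]
            congr 1
            linear_combination el * hc
    have hA : el = -ek := by
      have h := congrArg (fun v => B v (X i)) stepA
      simp only [map_smul, LinearMap.smul_apply, smul_eq_mul] at h
      have h2 := mul_right_cancel₀ (hb i) h
      linarith
    -- Step B : ek = el
    have hskew' : ∀ (z : Fin (r + s) → ℝ) (Y W : V), B (J z Y) W = - B Y (J z W) := by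
      intro z Y W
      have := hskew z Y W
      linarith
    have normk : B (J (Z k) (X i)) (J (Z k) (X i)) = ek * B (X i) (X i) := by
      rw [hskew', hJ2 k (X i)]
      simp only [map_smul, smul_eq_mul]
      ring
    have norml : B (J (Z l) (X i)) (J (Z l) (X i)) = el * B (X i) (X i) := by
      rw [hskew', hJ2 l (X i)]
      simp only [map_smul, smul_eq_mul]
      ring
    have normk' : B (J (Z k) (X i)) (J (Z k) (X i)) = el * B (X i) (X i) := by
      rw [hJkl]
      simp only [map_smul, LinearMap.smul_apply, smul_eq_mul]
      rw [norml]
      linear_combination (el * B (X i) (X i)) * hc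
    have hB : ek = el := by
      have hb' := hb i
      rw [normk] at normk'
      have : (ek - el) * B (X i) (X i) = 0 := by linarith
      rcases mul_eq_zero.mp this with h | h
      · linarith
      · exact absurd h hb'
    have hek1 : ek = 1 ∨ ek = -1 := by
      rw [hek]; split <;> simp
    rcases hek1 with h | h <;> rw [h] at hA hB <;> linarith [hA, hB]
  constructor
  · intro i k l h
    rcases h with h | h
    · exact key i k l 1 (by norm_num) (by rw [one_smul]; exact h)
    · exact key i k l (-1) (by norm_num) (by rw [neg_smul, one_smul]; exact h)
  · intro i j k l hk hl
    rcases hk with hk | hk <;> rcases hl with hl | hl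
    · exact key i k l 1 (by norm_num) (by rw [one_smul, hk, hl])
    · exact key i k l (-1) (by norm_num) (by rw [neg_smul, one_smul, hk, hl, neg_neg])
    · exact key i k l (-1) (by norm_num) (by rw [neg_smul, one_smul, hk, hl])
    · exact key i k l 1 (by norm_num) (by rw [one_smul, hk, hl])
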